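/- Regularised b approximation: let b ∈ C¹(ℝ) with 0 < b'(p) ≤ b_M for all p and b'(p) → 0 as p → ±∞. For δ > 0 small, let p_l^δ < p_r^δ be such that b'(p_l^δ) = b'(p_r^δ) = δ and b' > δ on (p_l^δ, p_r^δ), and define b_δ ∈ C¹(ℝ) by b_δ = b on [p_l^δ, p_r^δ], b_δ'(p) = δ for p ≤ p_l^δ and p ≥ p_r^δ (with b_δ continuous). Then b_δ' ≥ δ everywhere, b_δ' ≤ b_M, and there exists C > 0 (independent of δ and p) with |b_δ(p) − b(p)| ≤ C δ (|p| + 1) for all p ∈ ℝ. -/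

import Mathlib

open Filter

/-- Regularised `b` approximation: let `b ∈ C¹(ℝ)` with
`0 < b' ≤ b_M` and `b'(p) → 0` as `p → ±∞`. For small `δ > 0` let
`p_l^δ < 0 < p_r^δ` with `b' = δ` at both points, `b' > δ` strictly between them
(and `b' ≤ δ` outside), and let `b_δ ∈ C¹(ℝ)` agree with `b` on `[p_l^δ, p_r^δ]`
and have `b_δ' = δ` outside. Then `b_δ' ≥ δ` everywhere, `b_δ' ≤ b_M`, and there is
a constant `C > 0`, independent of `δ` and `p`, with
`|b_δ(p) − b(p)| ≤ C δ (|p| + 1)` for all `p`. -/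
theorem stmt17 (b : ℝ → ℝ) (bM : ℝ)
    (hb : ContDiff ℝ 1 b)
    (hb' : ∀ p, 0 < deriv b p ∧ deriv b p ≤ bM)
    (hbtop : Tendsto (deriv b) atTop (nhds 0))
    (hbbot : Tendsto (deriv b) atBot (nhds 0)) :
    ∃ C : ℝ, 0 < C ∧
      ∀ (δ pl pr : ℝ) (bδ : ℝ → ℝ), 0 < δ → pl < 0 → 0 < pr →
        deriv b pl = δ → deriv b pr = δ →
        (∀ p ∈ Set.Ioo pl pr, δ < deriv b p) →
        (∀ p : ℝ, p ≤ pl ∨ pr ≤ p → deriv b p ≤ δ) →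
        ContDiff ℝ 1 bδ →
        (∀ p ∈ Set.Icc pl pr, bδ p = b p) →
        (∀ p : ℝ, p ≤ pl ∨ pr ≤ p → deriv bδ p = δ) →
        (∀ p : ℝ, δ ≤ deriv bδ p) ∧
        (∀ p : ℝ, deriv bδ p ≤ bM) ∧
        (∀ p : ℝ, |bδ p - b p| ≤ C * δ * (|p| + 1)) := by
  refine ⟨1, one_pos, ?_⟩
  intro δ pl pr bδ hδ hpl hpr hdl hdr hmid hout hbδ heq hδout
  have hplr : pl < pr := hpl.trans hpr
  have hdiffb : Differentiable ℝ b := hb.differentiable one_ne_zero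
  have hdiffbδ : Differentiable ℝ bδ := hbδ.differentiable one_ne_zero
  have hderiv_eq : ∀ p ∈ Set.Ioo pl pr, deriv bδ p = deriv b p := by
    intro p hp
    apply Filter.EventuallyEq.deriv_eq
    filter_upwards [Ioo_mem_nhds hp.1 hp.2] with q hq
    exact heq q (Set.Ioo_subset_Icc_self hq)
  refine ⟨?_, ?_, ?_⟩
  · intro p
    rcases le_or_gt p pl with h | h
    · exact (hδout p (Or.inl h)).ge
    rcases le_or_gt pr p with h2 | h2
    · exact (hδout p (Or.inr h2)).ge
    · rw [hderiv_eq p ⟨h, h2⟩]; exact (hmid p ⟨h, h2⟩).le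
  · intro p
    have hδbM : δ ≤ bM := hdl ▸ (hb' pl).2
    rcases le_or_gt p pl with h | h
    · rw [hδout p (Or.inl h)]; exact hδbM
    rcases le_or_gt pr p with h2 | h2
    · rw [hδout p (Or.inr h2)]; exact hδbM
    · rw [hderiv_eq p ⟨h, h2⟩]; exact (hb' p).2
  · intro p
    rcases le_or_gt p pl with h | h
    · -- left region
      have hf : ∀ x ∈ Set.Iic pl, HasDerivWithinAt (fun t => bδ t - b t)
          (δ - deriv b x) (Set.Iic pl) x := by
        intro x hx
        have h1 : HasDerivAt bδ δ x := by
          have := (hdiffbδ x).hasDerivAt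
          rwa [hδout x (Or.inl hx)] at this
        exact (h1.sub (hdiffb x).hasDerivAt).hasDerivWithinAt
      have hbound : ∀ x ∈ Set.Iic pl, ‖δ - deriv b x‖ ≤ δ := by
        intro x hx
        rw [Real.norm_eq_abs, abs_sub_le_iff]
        constructor
        · linarith [(hb' x).1]
        · linarith [hout x (Or.inl hx)]
      have key := Convex.norm_image_sub_le_of_norm_hasDerivWithin_le hf hbound (convex_Iic pl)
        (Set.mem_Iic.mpr le_rfl) (Set.mem_Iic.mpr h)
      have hzero : bδ pl - b pl = 0 := by
        rw [heq pl ⟨le_rfl, hplr.le⟩, sub_self]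
      rw [hzero, sub_zero, Real.norm_eq_abs, Real.norm_eq_abs] at key
      have hp0 : p < 0 := lt_of_le_of_lt h hpl
      have : |p - pl| ≤ |p| + 1 := by
        rw [abs_of_nonpos (by linarith), abs_of_neg hp0]; linarith
      calc |bδ p - b p| ≤ δ * |p - pl| := key
        _ ≤ δ * (|p| + 1) := by nlinarith [abs_nonneg (p - pl)]
        _ = 1 * δ * (|p| + 1) := by ring
    rcases le_or_gt p pr with h2 | h2
    · rw [heq p ⟨h.le, h2⟩, sub_self, abs_zero]
      positivity
    · -- right region
      have hf : ∀ x ∈ Set.Ici pr, HasDerivWithinAt (fun t => bδ t - b t)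
          (δ - deriv b x) (Set.Ici pr) x := by
        intro x hx
        have h1 : HasDerivAt bδ δ x := by
          have := (hdiffbδ x).hasDerivAt
          rwa [hδout x (Or.inr hx)] at this
        exact (h1.sub (hdiffb x).hasDerivAt).hasDerivWithinAt
      have hbound : ∀ x ∈ Set.Ici pr, ‖δ - deriv b x‖ ≤ δ := by
        intro x hx
        rw [Real.norm_eq_abs, abs_sub_le_iff]
        constructor
        · linarith [(hb' x).1]
        · linarith [hout x (Or.inr hx)]
      have key := Convex.norm_image_sub_le_of_norm_hasDerivWithin_le hf hbound (convex_Ici pr)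
        (Set.mem_Ici.mpr le_rfl) (Set.mem_Ici.mpr h2.le)
      have hzero : bδ pr - b pr = 0 := by
        rw [heq pr ⟨hplr.le, le_rfl⟩, sub_self]
      rw [hzero, sub_zero, Real.norm_eq_abs, Real.norm_eq_abs] at key
      have hp0 : 0 < p := hpr.trans h2
      have : |p - pr| ≤ |p| + 1 := by
        rw [abs_of_nonneg (by linarith), abs_of_pos hp0]; linarith
      calc |bδ p - b p| ≤ δ * |p - pr| := key
        _ ≤ δ * (|p| + 1) := by nlinarith [abs_nonneg (p - pr)]
        _ = 1 * δ * (|p| + 1) := by ring
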